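/- arXiv:1709.01882 — 2 statements merged into one kernel-verified Lean document; each statement's English description precedes it below -/
import Mathlib

section
/- The map sending x₁x₂…x_ℓ to its reversal is an isomorphism from the subKautz digraph sK(d,ℓ) to its converse digraph. -/
/-- Consecutive entries are distinct (subKautz vertex condition). -/
abbrev consecNe {m n : ℕ} (x : Fin m → Fin n) : Prop :=
  ∀ i j : Fin m, j.val = i.val + 1 → x i ≠ x j

/-- Adjacency in the subKautz digraph `sK(d,ℓ)`: `y` is the left shift of `x` with a new
last symbol distinct from `x₁` and from `x_ℓ`. -/
abbrev sKAdj {m n : ℕ} (x y : Fin m → Fin n) : Prop :=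
  (∀ i j : Fin m, j.val = i.val + 1 → y i = x j) ∧
  (∀ i j : Fin m, i.val = m - 1 → j.val = 0 → y i ≠ x j) ∧
  (∀ i : Fin m, i.val = m - 1 → y i ≠ x i)

/-- The reversal map `Ψ(x₁x₂…x_ℓ) = x_ℓ…x₂x₁`. -/
def rev {m n : ℕ} (x : Fin m → Fin n) : Fin m → Fin n :=
  fun i => x ⟨m - 1 - i.val, by have := i.isLt; omega⟩

lemma rev_rev {m n : ℕ} (x : Fin m → Fin n) : rev (rev x) = x := by
  funext i
  simp only [rev]
  congr 1
  ext
  have := i.isLt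
  simp
  omega

lemma consecNe_rev {m n : ℕ} (x : Fin m → Fin n) (hx : consecNe x) : consecNe (rev x) := by
  intro i j hij h
  have hj := j.isLt
  have : x ⟨m - 1 - j.val, by omega⟩ ≠ x ⟨m - 1 - i.val, by have := i.isLt; omega⟩ :=
    hx _ _ (by simp; omega)
  exact this h.symm

lemma adj_rev {m n : ℕ} (x y : Fin m → Fin n) (hm : 2 ≤ m) (hx : consecNe x)
    (h : sKAdj x y) : sKAdj (rev y) (rev x) := by
  obtain ⟨h1, h2, h3⟩ := h
  refine ⟨?_, ?_, ?_⟩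
  · intro i j hij
    have hj := j.isLt
    show x ⟨m - 1 - i.val, _⟩ = y ⟨m - 1 - j.val, _⟩
    exact (h1 ⟨m - 1 - j.val, by omega⟩ ⟨m - 1 - i.val, by have := i.isLt; omega⟩
      (by simp; omega)).symm
  · intro i j hi hj
    show x ⟨m - 1 - i.val, _⟩ ≠ y ⟨m - 1 - j.val, _⟩
    have := h2 ⟨m - 1 - j.val, by have := j.isLt; omega⟩ ⟨m - 1 - i.val, by omega⟩
      (by simp; omega) (by simp; omega)
    exact fun he => this he.symm
  · intro i hi
    show x ⟨m - 1 - i.val, _⟩ ≠ y ⟨m - 1 - i.val, _⟩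
    have h01 : y ⟨m - 1 - i.val, by omega⟩ = x ⟨1, by omega⟩ :=
      h1 _ ⟨1, by omega⟩ (by simp; omega)
    rw [h01]
    have := hx ⟨m - 1 - i.val, by omega⟩ ⟨1, by omega⟩ (by simp; omega)
    exact this

/-- Reversal is an isomorphism from the subKautz digraph `sK(d,ℓ)` to its converse: it
maps vertices bijectively to vertices, and `x → y` is an arc of `sK(d,ℓ)` iff
`Ψ(y) → Ψ(x)` is an arc of `sK(d,ℓ)`. -/
theorem stmt8 (d ℓ : ℕ) (hd : 2 ≤ d) (hℓ : 2 ≤ ℓ) :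
    (∀ x : Fin ℓ → Fin (d + 1), consecNe x → consecNe (rev x)) ∧
    Set.BijOn (rev (m := ℓ) (n := d + 1)) {x | consecNe x} {x | consecNe x} ∧
    (∀ x y : Fin ℓ → Fin (d + 1), consecNe x → consecNe y →
      (sKAdj x y ↔ sKAdj (rev y) (rev x))) := by
  refine ⟨fun x hx => consecNe_rev x hx, ⟨?_, ?_, ?_⟩, ?_⟩
  · exact fun x hx => consecNe_rev x hx
  · intro a _ b _ hab
    have := congrArg rev hab
    rwa [rev_rev, rev_rev] at this
  · intro y hy
    exact ⟨rev y, consecNe_rev y hy, rev_rev y⟩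
  · intro x y hx hy
    constructor
    · exact adj_rev x y hℓ hx
    · intro h
      have := adj_rev (rev y) (rev x) hℓ (consecNe_rev y hy) h
      rwa [rev_rev, rev_rev] at this
end

section
/- The mean distance of the cyclic Kautz digraph CK(d,3) with d ≥ 3 equals (3d³ + d² − 5d − 2)/(d³ − d), computed as (1/N)·Σ_{k=0}^{5} k·N_k where N = d³ − d and the distance distribution from any fixed vertex is N₀ = 1, N₁ = d−1, N₂ = (d−1)², N₃ = (d−1)³ − 1, N₄ = 2(d−1)², N₅ = d−1. -/
/-- Vertex of `CK(d,3)`: a triple with `x₁ ≠ x₂`, `x₂ ≠ x₃`, `x₁ ≠ x₃`. -/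
abbrev ck3Vert {n : ℕ} (x : Fin 3 → Fin n) : Prop :=
  x 0 ≠ x 1 ∧ x 1 ≠ x 2 ∧ x 0 ≠ x 2

/-- Arc of `CK(d,3)`: `x₁x₂x₃ → x₂x₃y` with `y ≠ x₂, x₃`. -/
abbrev ck3Adj {n : ℕ} (x y : Fin 3 → Fin n) : Prop :=
  y 0 = x 1 ∧ y 1 = x 2 ∧ y 2 ≠ x 1 ∧ y 2 ≠ x 2

/-- A walk of length `k` in `CK(d,3)` from `u` to `v`. -/
abbrev ck3Walk {n : ℕ} (k : ℕ) (u v : Fin 3 → Fin n) : Prop :=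
  ∃ w : Fin (k + 1) → Fin 3 → Fin n, w 0 = u ∧ w (Fin.last k) = v ∧
    (∀ i, ck3Vert (w i)) ∧ ∀ i j : Fin (k + 1), j.val = i.val + 1 → ck3Adj (w i) (w j)

/-- `v` is at distance exactly `m` from `u` in `CK(d,3)`. -/
abbrev ck3DistEq {n : ℕ} (u v : Fin 3 → Fin n) (m : ℕ) : Prop :=
  ck3Walk m u v ∧ ∀ k < m, ¬ ck3Walk k u v

/- ### Walk characterizations -/

lemma walk_zero {n : ℕ} {u v : Fin 3 → Fin n} :
    ck3Walk 0 u v ↔ v = u ∧ ck3Vert u := by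
  constructor
  · rintro ⟨w, h0, hl, hv, -⟩
    have : (Fin.last 0) = (0 : Fin 1) := rfl
    rw [this, h0] at hl
    exact ⟨hl.symm, h0 ▸ hv 0⟩
  · rintro ⟨rfl, hu⟩
    exact ⟨fun _ => v, rfl, rfl, fun _ => hu, fun i j hij => by omega⟩

lemma walk_succ {n k : ℕ} {u v : Fin 3 → Fin n} :
    ck3Walk (k + 1) u v ↔ ∃ m, ck3Vert u ∧ ck3Adj u m ∧ ck3Walk k m v := by
  constructor
  · rintro ⟨w, h0, hl, hv, ha⟩
    refine ⟨w 1, h0 ▸ hv 0, ?_, w ∘ Fin.succ, rfl, ?_, fun i => hv _, fun i j hij => ha _ _ ?_⟩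
    · have := ha 0 1 (by simp)
      rwa [h0] at this
    · show w (Fin.last k).succ = v
      rw [Fin.succ_last]; exact hl
    · show (j.succ).val = i.succ.val + 1
      simp [Fin.val_succ, hij]
  · rintro ⟨m, hu, ham, w, h0, hl, hv, ha⟩
    refine ⟨Fin.cons u w, rfl, ?_, ?_, ?_⟩
    · rw [← Fin.succ_last, Fin.cons_succ]; exact hl
    · intro i
      refine Fin.cases ?_ ?_ i
      · simpa using hu
      · intro i'; simpa using hv i'
    · intro i j hij
      have hj0 : j ≠ 0 := by
        intro h; rw [h] at hij; simp at hij
      obtain ⟨j', rfl⟩ := Fin.eq_succ_of_ne_zero hj0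
      rcases Fin.eq_zero_or_eq_succ i with rfl | ⟨i', rfl⟩
      · have : j' = 0 := by
          apply Fin.ext
          have := hij
          simp [Fin.val_succ] at this ⊢
          omega
        subst this
        simpa [Fin.cons_succ, Fin.cons_zero, h0] using ham
      · have hij' : j'.val = i'.val + 1 := by
          simp [Fin.val_succ] at hij
          omega
        simpa [Fin.cons_succ] using ha i' j' hij'

lemma walk_one {n : ℕ} {u v : Fin 3 → Fin n} :
    ck3Walk 1 u v ↔ ck3Vert u ∧
      (v 0 = u 1 ∧ v 1 = u 2 ∧ v 2 ≠ u 1 ∧ v 2 ≠ u 2) := by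
  refine Iff.trans (walk_succ (k := 0)) ?_
  constructor
  · rintro ⟨m, hu, ham, hw⟩
    rw [walk_zero] at hw
    obtain ⟨rfl, -⟩ := hw
    exact ⟨hu, ham⟩
  · rintro ⟨hu, h0, h1, h2, h3⟩
    refine ⟨v, hu, ⟨h0, h1, h2, h3⟩, walk_zero.2 ⟨rfl, ?_, ?_, ?_⟩⟩
    · rw [h0, h1]; exact hu.2.1
    · rw [h1]; exact fun h => h3 h.symm
    · rw [h0]; exact fun h => h2 h.symm

lemma walk_two {n : ℕ} {u v : Fin 3 → Fin n} :
    ck3Walk 2 u v ↔ ck3Vert u ∧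
      (v 0 = u 2 ∧ v 1 ≠ u 1 ∧ v 1 ≠ u 2 ∧ v 2 ≠ v 1 ∧ v 2 ≠ u 2) := by
  refine Iff.trans (walk_succ (k := 1)) ?_
  constructor
  · rintro ⟨m, hu, ham, hw⟩
    rw [walk_one] at hw
    obtain ⟨hm, e0, e1, e2, e3⟩ := hw
    obtain ⟨a0, a1, a2, a3⟩ := ham
    refine ⟨hu, by rw [e0, a1], by rw [e1]; exact a2, by rw [e1]; exact a3, ?_, ?_⟩
    · rw [e1]; exact e3
    · rw [← a1]; exact e2
  · rintro ⟨hu, h0, h1, h2, h3, h4⟩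
    refine ⟨![u 1, u 2, v 1], hu, ⟨rfl, rfl, h1, h2⟩, walk_one.2 ⟨⟨hu.2.1, ?_, ?_⟩, ?_, rfl, ?_, ?_⟩⟩
    · show u 2 ≠ v 1; exact fun h => h2 h.symm
    · show u 1 ≠ v 1; exact fun h => h1 h.symm
    · show v 0 = u 2; exact h0
    · show v 2 ≠ u 2; exact h4
    · show v 2 ≠ v 1; exact h3

lemma walk_three {n : ℕ} {u v : Fin 3 → Fin n} :
    ck3Walk 3 u v ↔ ck3Vert u ∧ ck3Vert v ∧
      (v 0 ≠ u 1 ∧ v 0 ≠ u 2 ∧ v 1 ≠ u 2) := by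
  refine Iff.trans (walk_succ (k := 2)) ?_
  constructor
  · rintro ⟨m, hu, ham, hw⟩
    rw [walk_two] at hw
    obtain ⟨hm, e0, e1, e2, e3, e4⟩ := hw
    obtain ⟨a0, a1, a2, a3⟩ := ham
    refine ⟨hu, ⟨?_, ?_, ?_⟩, ?_, ?_, ?_⟩
    · exact fun h => e2 (h.symm.trans e0)
    · exact fun h => e3 h.symm
    · exact fun h => e4 (h.symm.trans e0)
    · exact fun h => a2 (e0.symm.trans h)
    · exact fun h => a3 (e0.symm.trans h)
    · exact fun h => e1 (h.trans a1.symm)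
  · rintro ⟨hu, hv, h0, h1, h2⟩
    refine ⟨![u 1, u 2, v 0], hu, ⟨rfl, rfl, h0, h1⟩,
      walk_two.2 ⟨⟨hu.2.1, fun h => h1 h.symm, fun h => h0 h.symm⟩, rfl, ?_, ?_, ?_, ?_⟩⟩
    · show v 1 ≠ u 2; exact h2
    · show v 1 ≠ v 0; exact fun h => hv.1 h.symm
    · show v 2 ≠ v 1; exact fun h => hv.2.1 h.symm
    · show v 2 ≠ v 0; exact fun h => hv.2.2 h.symm

lemma walk_four {n : ℕ} {u v : Fin 3 → Fin n} :
    ck3Walk 4 u v ↔ ck3Vert u ∧ ck3Vert v ∧ v 0 ≠ u 2 ∧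
      ∃ e : Fin n, e ≠ u 1 ∧ e ≠ u 2 ∧ e ≠ v 0 ∧ e ≠ v 1 := by
  refine Iff.trans (walk_succ (k := 3)) ?_
  constructor
  · rintro ⟨m, hu, ham, hw⟩
    rw [walk_three] at hw
    obtain ⟨hm, hv, e0, e1, e2⟩ := hw
    obtain ⟨a0, a1, a2, a3⟩ := ham
    refine ⟨hu, hv, by rw [← a1]; exact e0, m 2, a2, a3, fun h => e1 h.symm, fun h => e2 h.symm⟩
  · rintro ⟨hu, hv, h0, e, he1, he2, he3, he4⟩
    refine ⟨![u 1, u 2, e], hu, ⟨rfl, rfl, he1, he2⟩,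
      walk_three.2 ⟨⟨hu.2.1, fun h => he2 h.symm, fun h => he1 h.symm⟩, hv, ?_, ?_, ?_⟩⟩
    · show v 0 ≠ u 2; exact h0
    · show v 0 ≠ e; exact fun h => he3 h.symm
    · show v 1 ≠ e; exact fun h => he4 h.symm

lemma exists_ne3 {n : ℕ} (hn : 4 ≤ n) (p q r : Fin n) :
    ∃ x : Fin n, x ≠ p ∧ x ≠ q ∧ x ≠ r := by
  have h : (({p, q, r} : Finset (Fin n))ᶜ).Nonempty := by
    rw [← Finset.card_pos, Finset.card_compl]
    have h1 : ({p, q, r} : Finset (Fin n)).card ≤ 3 := by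
      apply le_trans (Finset.card_insert_le _ _)
      have := Finset.card_insert_le q ({r} : Finset (Fin n))
      simp at this ⊢
      omega
    simp only [Fintype.card_fin]
    omega
  obtain ⟨x, hx⟩ := h
  simp [not_or] at hx
  exact ⟨x, hx.1, hx.2.1, hx.2.2⟩

lemma walk_five_of {n : ℕ} (hn : 4 ≤ n) {u v : Fin 3 → Fin n} (hu : ck3Vert u)
    (hv : ck3Vert v) (h0 : v 0 = u 2) (h1 : v 1 = u 1) : ck3Walk 5 u v := by
  obtain ⟨e, he1, he2, -⟩ := exists_ne3 hn (u 1) (u 2) (u 2)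
  obtain ⟨f, hf1, hf2, hf3⟩ := exists_ne3 hn (u 1) (u 2) e
  refine (walk_succ (k := 4) (u := u) (v := v)).2
    ⟨![u 1, u 2, e], hu, ⟨rfl, rfl, he1, he2⟩,
    walk_four.2 ⟨⟨hu.2.1, fun h => he2 h.symm, fun h => he1 h.symm⟩, hv, ?_, f, ?_, ?_, ?_, ?_⟩⟩
  · show v 0 ≠ e; rw [h0]; exact fun h => he2 h.symm
  · show f ≠ u 2; exact hf2
  · show f ≠ e; exact hf3
  · rw [h0]; exact hf2
  · rw [h1]; exact hf1

/- ### Counting machinery -/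

open Finset in
lemma card_triple {n : ℕ} (P1 : Fin n → Prop) (P2 : Fin n → Fin n → Prop)
    (P3 : Fin n → Fin n → Fin n → Prop) [DecidablePred P1] [∀ x, DecidablePred (P2 x)]
    [∀ x y, DecidablePred (P3 x y)] :
    (univ.filter (fun v : Fin 3 → Fin n => P1 (v 0) ∧ P2 (v 0) (v 1) ∧ P3 (v 0) (v 1) (v 2))).card
      = ∑ x ∈ univ.filter P1, ∑ y ∈ univ.filter (P2 x), (univ.filter (P3 x y)).card := by
  classical
  have hs : ∑ x ∈ univ.filter P1, ∑ y ∈ univ.filter (P2 x), (univ.filter (P3 x y)).card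
      = ((univ.filter P1).sigma fun x => (univ.filter (P2 x)).sigma fun y =>
          univ.filter (P3 x y)).card := by
    rw [Finset.card_sigma]
    exact Finset.sum_congr rfl fun x _ => (Finset.card_sigma _ _).symm
  rw [hs]
  apply Finset.card_bij' (i := fun v _ => (⟨v 0, v 1, v 2⟩ : Σ _ : Fin n, Σ _ : Fin n, Fin n))
    (j := fun p _ => ![p.1, p.2.1, p.2.2])
  · intro v hv
    simp only [Finset.mem_filter, Finset.mem_univ, true_and] at hv
    simp [Finset.mem_sigma, hv.1, hv.2.1, hv.2.2]
  · rintro ⟨x, y, z⟩ hp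
    simp only [Finset.mem_sigma, Finset.mem_filter, Finset.mem_univ, true_and] at hp
    simp only [Finset.mem_filter, Finset.mem_univ, true_and]
    exact ⟨hp.1, hp.2.1, hp.2.2⟩
  · intro v hv
    funext i
    fin_cases i <;> rfl
  · rintro ⟨x, y, z⟩ hp
    rfl

/-- The mean distance of `CK(d,3)` with `d ≥ 3` is `(3d³ + d² − 5d − 2)/(d³ − d)`:
from any fixed vertex the distance distribution is `N₀ = 1`, `N₁ = d−1`,
`N₂ = (d−1)²`, `N₃ = (d−1)³ − 1`, `N₄ = 2(d−1)²`, `N₅ = d−1` (summing to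
`N = d³ − d` vertices), and the average distance `(1/N)·Σ_k k·N_k` equals the stated
value. -/
theorem stmt19 (d : ℕ) (hd : 3 ≤ d)
    (u : Fin 3 → Fin (d + 1)) (hu : ck3Vert u) :
    {v : Fin 3 → Fin (d + 1) | ck3Vert v ∧ ck3DistEq u v 0}.ncard = 1 ∧
    {v : Fin 3 → Fin (d + 1) | ck3Vert v ∧ ck3DistEq u v 1}.ncard = d - 1 ∧
    {v : Fin 3 → Fin (d + 1) | ck3Vert v ∧ ck3DistEq u v 2}.ncard = (d - 1) ^ 2 ∧
    {v : Fin 3 → Fin (d + 1) | ck3Vert v ∧ ck3DistEq u v 3}.ncard = (d - 1) ^ 3 - 1 ∧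
    {v : Fin 3 → Fin (d + 1) | ck3Vert v ∧ ck3DistEq u v 4}.ncard = 2 * (d - 1) ^ 2 ∧
    {v : Fin 3 → Fin (d + 1) | ck3Vert v ∧ ck3DistEq u v 5}.ncard = d - 1 ∧
    {v : Fin 3 → Fin (d + 1) | ck3Vert v}.ncard = d ^ 3 - d ∧
    ((∑ v : {v : Fin 3 → Fin (d + 1) // ck3Vert v},
        (sInf {k : ℕ | ck3Walk k u v.val} : ℕ) : ℕ) : ℚ) / ((d : ℚ) ^ 3 - d) =
      (3 * (d : ℚ) ^ 3 + d ^ 2 - 5 * d - 2) / ((d : ℚ) ^ 3 - d) := by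
  have hab : u 0 ≠ u 1 := hu.1
  have hbc : u 1 ≠ u 2 := hu.2.1
  have hac : u 0 ≠ u 2 := hu.2.2
  have hn4 : 4 ≤ d + 1 := by omega
  have hsinf : ∀ {v : Fin 3 → Fin (d + 1)} {m : ℕ}, ck3DistEq u v m →
      sInf {k | ck3Walk k u v} = m := by
    rintro v m ⟨h1, h2⟩
    have hmem : m ∈ {k | ck3Walk k u v} := h1
    rcases lt_or_eq_of_le (Nat.sInf_le hmem) with hlt | he
    · exact absurd (Nat.sInf_mem ⟨m, hmem⟩) (h2 _ hlt)
    · exact he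
  have huniq : ∀ {v : Fin 3 → Fin (d + 1)} {i j : ℕ},
      ck3DistEq u v i → ck3DistEq u v j → i = j := by
    rintro v i j ⟨hi1, hi2⟩ ⟨hj1, hj2⟩
    by_contra h
    rcases Nat.lt_or_ge i j with hlt | hge
    · exact hj2 i hlt hi1
    · exact hi2 j (by omega) hj1
  set F0 : Finset (Fin 3 → Fin (d + 1)) := {u} with hF0d
  set F1 : Finset (Fin 3 → Fin (d + 1)) :=
    Finset.univ.filter (fun v => v 0 = u 1 ∧ v 1 = u 2 ∧ (v 2 ≠ u 1 ∧ v 2 ≠ u 2)) with hF1d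
  set F2 : Finset (Fin 3 → Fin (d + 1)) :=
    Finset.univ.filter (fun v => v 0 = u 2 ∧ (v 1 ≠ u 1 ∧ v 1 ≠ u 2) ∧ (v 2 ≠ v 1 ∧ v 2 ≠ u 2))
      with hF2d
  set F3b : Finset (Fin 3 → Fin (d + 1)) :=
    Finset.univ.filter (fun v => (v 0 ≠ u 1 ∧ v 0 ≠ u 2) ∧ (v 1 ≠ v 0 ∧ v 1 ≠ u 2) ∧
      (v 2 ≠ v 0 ∧ v 2 ≠ v 1)) with hF3bd
  set F3 : Finset (Fin 3 → Fin (d + 1)) := F3b.erase u with hF3d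
  set F4A : Finset (Fin 3 → Fin (d + 1)) :=
    Finset.univ.filter (fun v => v 0 = u 1 ∧ (v 1 ≠ u 1 ∧ v 1 ≠ u 2) ∧ (v 2 ≠ u 1 ∧ v 2 ≠ v 1))
      with hF4Ad
  set F4B : Finset (Fin 3 → Fin (d + 1)) :=
    Finset.univ.filter (fun v => (v 0 ≠ u 1 ∧ v 0 ≠ u 2) ∧ v 1 = u 2 ∧ (v 2 ≠ v 0 ∧ v 2 ≠ u 2))
      with hF4Bd
  set F4 : Finset (Fin 3 → Fin (d + 1)) := F4A ∪ F4B with hF4d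
  set F5 : Finset (Fin 3 → Fin (d + 1)) :=
    Finset.univ.filter (fun v => v 0 = u 2 ∧ v 1 = u 1 ∧ (v 2 ≠ u 1 ∧ v 2 ≠ u 2)) with hF5d
  set SF : Finset (Fin 3 → Fin (d + 1)) := Finset.univ.filter (fun v => ck3Vert v) with hSFd
  -- counting helpers
  have sum_eq_pt : ∀ (a : Fin (d + 1)) (f : Fin (d + 1) → ℕ),
      ∑ x ∈ Finset.univ.filter (fun x => x = a), f x = f a := by
    intro a f
    rw [Finset.filter_eq']
    simp
  have card_ne2 : ∀ {a b : Fin (d + 1)}, a ≠ b →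
      (Finset.univ.filter (fun x : Fin (d + 1) => x ≠ a ∧ x ≠ b)).card = d - 1 := by
    intro a b h
    have he : (Finset.univ.filter (fun x : Fin (d + 1) => x ≠ a ∧ x ≠ b))
        = ({a, b} : Finset (Fin (d + 1)))ᶜ := by
      ext x; simp [not_or]
    rw [he, Finset.card_compl, Finset.card_insert_of_notMem (by simpa using h),
      Finset.card_singleton]
    simp only [Fintype.card_fin]
    omega
  have card_ne1 : ∀ (a : Fin (d + 1)),
      (Finset.univ.filter (fun x : Fin (d + 1) => x ≠ a)).card = d := by
    intro a
    rw [Finset.filter_ne', Finset.card_erase_of_mem (Finset.mem_univ a)]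
    simp
  -- cardinalities
  have c0 : F0.card = 1 := Finset.card_singleton u
  have c1 : F1.card = d - 1 := by
    rw [hF1d]
    refine Eq.trans (card_triple (fun x => x = u 1) (fun _ y => y = u 2)
      (fun _ _ z => z ≠ u 1 ∧ z ≠ u 2)) ?_
    beta_reduce
    rw [sum_eq_pt, sum_eq_pt]
    exact card_ne2 hbc
  have c2 : F2.card = (d - 1) * (d - 1) := by
    rw [hF2d]
    refine Eq.trans (card_triple (fun x => x = u 2) (fun _ y => y ≠ u 1 ∧ y ≠ u 2)
      (fun _ y z => z ≠ y ∧ z ≠ u 2)) ?_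
    beta_reduce
    rw [sum_eq_pt]
    rw [Finset.sum_congr rfl (fun y hy => card_ne2 (by
        simp only [Finset.mem_filter] at hy
        exact hy.2.2)),
      Finset.sum_const, card_ne2 hbc, smul_eq_mul]
  have c3b : F3b.card = (d - 1) * ((d - 1) * (d - 1)) := by
    rw [hF3bd]
    refine Eq.trans (card_triple (fun x => x ≠ u 1 ∧ x ≠ u 2) (fun x y => y ≠ x ∧ y ≠ u 2)
      (fun x y z => z ≠ x ∧ z ≠ y)) ?_
    beta_reduce
    have inner : ∀ x ∈ Finset.univ.filter (fun x : Fin (d + 1) => x ≠ u 1 ∧ x ≠ u 2),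
        (∑ y ∈ Finset.univ.filter (fun y => y ≠ x ∧ y ≠ u 2),
          (Finset.univ.filter (fun z : Fin (d + 1) => z ≠ x ∧ z ≠ y)).card)
        = (d - 1) * (d - 1) := by
      intro x hx
      rw [Finset.sum_congr rfl (fun y hy => card_ne2 (by
          simp only [Finset.mem_filter] at hy
          exact fun h => hy.2.1 h.symm)),
        Finset.sum_const, smul_eq_mul,
        card_ne2 (by simp only [Finset.mem_filter] at hx; exact hx.2.2)]
    rw [Finset.sum_congr rfl inner, Finset.sum_const, smul_eq_mul, card_ne2 hbc]
  have hu3b : u ∈ F3b := by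
    rw [hF3bd]
    simp only [Finset.mem_filter, Finset.mem_univ, true_and]
    exact ⟨⟨hab, hac⟩, ⟨Ne.symm hab, hbc⟩, ⟨Ne.symm hac, Ne.symm hbc⟩⟩
  have c3 : F3.card = (d - 1) * ((d - 1) * (d - 1)) - 1 := by
    rw [hF3d, Finset.card_erase_of_mem hu3b, c3b]
  have c4A : F4A.card = (d - 1) * (d - 1) := by
    rw [hF4Ad]
    refine Eq.trans (card_triple (fun x => x = u 1) (fun _ y => y ≠ u 1 ∧ y ≠ u 2)
      (fun _ y z => z ≠ u 1 ∧ z ≠ y)) ?_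
    beta_reduce
    rw [sum_eq_pt]
    rw [Finset.sum_congr rfl (fun y hy => card_ne2 (by
        simp only [Finset.mem_filter] at hy
        exact fun h => hy.2.1 h.symm)),
      Finset.sum_const, card_ne2 hbc, smul_eq_mul]
  have c4B : F4B.card = (d - 1) * (d - 1) := by
    rw [hF4Bd]
    refine Eq.trans (card_triple (fun x => x ≠ u 1 ∧ x ≠ u 2) (fun _ y => y = u 2)
      (fun x _ z => z ≠ x ∧ z ≠ u 2)) ?_
    beta_reduce
    rw [Finset.sum_congr rfl (fun x hx => ?_), Finset.sum_const, card_ne2 hbc, smul_eq_mul]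
    rw [sum_eq_pt]
    exact card_ne2 (by simp only [Finset.mem_filter] at hx; exact hx.2.2)
  have hdisAB : Disjoint F4A F4B := by
    rw [Finset.disjoint_left]
    intro v hvA hvB
    rw [hF4Ad] at hvA
    rw [hF4Bd] at hvB
    simp only [Finset.mem_filter, Finset.mem_univ, true_and] at hvA hvB
    exact hvB.1.1 hvA.1
  have c4 : F4.card = (d - 1) * (d - 1) + (d - 1) * (d - 1) := by
    rw [hF4d, Finset.card_union_of_disjoint hdisAB, c4A, c4B]
  have c5 : F5.card = d - 1 := by
    rw [hF5d]
    refine Eq.trans (card_triple (fun x => x = u 2) (fun _ y => y = u 1)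
      (fun _ _ z => z ≠ u 1 ∧ z ≠ u 2)) ?_
    beta_reduce
    rw [sum_eq_pt, sum_eq_pt]
    exact card_ne2 hbc
  have hSF2 : SF = Finset.univ.filter
      (fun v : Fin 3 → Fin (d + 1) => True ∧ (v 1 ≠ v 0) ∧ (v 2 ≠ v 0 ∧ v 2 ≠ v 1)) := by
    rw [hSFd]
    apply Finset.filter_congr
    intro v _
    constructor
    · rintro ⟨a, b, c⟩
      exact ⟨trivial, Ne.symm a, Ne.symm c, Ne.symm b⟩
    · rintro ⟨-, a, b, c⟩
      exact ⟨Ne.symm a, Ne.symm c, Ne.symm b⟩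
  have cS : SF.card = (d + 1) * (d * (d - 1)) := by
    rw [hSF2]
    refine Eq.trans (card_triple (fun _ => True) (fun x y => y ≠ x)
      (fun x y z => z ≠ x ∧ z ≠ y)) ?_
    beta_reduce
    have inner : ∀ x ∈ Finset.univ.filter (fun _ : Fin (d + 1) => True),
        (∑ y ∈ Finset.univ.filter (fun y => y ≠ x),
          (Finset.univ.filter (fun z : Fin (d + 1) => z ≠ x ∧ z ≠ y)).card)
        = d * (d - 1) := by
      intro x hx
      rw [Finset.sum_congr rfl (fun y hy => card_ne2 (by
          simp only [Finset.mem_filter] at hy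
          exact fun h => hy.2 h.symm)),
        Finset.sum_const, smul_eq_mul, card_ne1 x]
    rw [Finset.sum_congr rfl inner, Finset.sum_const, smul_eq_mul, Finset.filter_true,
      Finset.card_univ, Fintype.card_fin]
    -- inclusion lemmas
  have hI0 : ∀ v ∈ F0, ck3Vert v ∧ ck3DistEq u v 0 := by
    intro v hv
    rw [hF0d, Finset.mem_singleton] at hv
    subst hv
    exact ⟨hu, walk_zero.2 ⟨rfl, hu⟩, fun k hk => by omega⟩
  have hI1 : ∀ v ∈ F1, ck3Vert v ∧ ck3DistEq u v 1 := by
    intro v hv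
    rw [hF1d] at hv
    simp only [Finset.mem_filter, Finset.mem_univ, true_and] at hv
    obtain ⟨h0, h1, h2, h3⟩ := hv
    have hv' : ck3Vert v := ⟨by rw [h0, h1]; exact hbc, fun h => h3 (h.symm.trans h1),
      fun h => h2 (h.symm.trans h0)⟩
    refine ⟨hv', walk_one.2 ⟨hu, h0, h1, h2, h3⟩, ?_⟩
    intro k hk
    interval_cases k
    intro hw
    obtain ⟨he, -⟩ := walk_zero.1 hw
    exact hab ((congrFun he 0).symm.trans h0)
  have hI2 : ∀ v ∈ F2, ck3Vert v ∧ ck3DistEq u v 2 := by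
    intro v hv
    rw [hF2d] at hv
    simp only [Finset.mem_filter, Finset.mem_univ, true_and] at hv
    obtain ⟨h0, ⟨h1, h2⟩, h3, h4⟩ := hv
    have hv' : ck3Vert v := ⟨fun h => h2 (h.symm.trans h0), fun h => h3 h.symm,
      fun h => h4 (h.symm.trans h0)⟩
    refine ⟨hv', walk_two.2 ⟨hu, h0, h1, h2, h3, h4⟩, ?_⟩
    intro k hk
    interval_cases k
    · intro hw
      obtain ⟨he, -⟩ := walk_zero.1 hw
      exact hac ((congrFun he 0).symm.trans h0)
    · intro hw
      obtain ⟨-, e0, -⟩ := walk_one.1 hw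
      exact hbc (e0.symm.trans h0)
  have hI3 : ∀ v ∈ F3, ck3Vert v ∧ ck3DistEq u v 3 := by
    intro v hv
    rw [hF3d, Finset.mem_erase] at hv
    obtain ⟨hne, hmem⟩ := hv
    rw [hF3bd] at hmem
    simp only [Finset.mem_filter, Finset.mem_univ, true_and] at hmem
    obtain ⟨⟨p0, p1⟩, ⟨q0, q1⟩, r0, r1⟩ := hmem
    have hv' : ck3Vert v := ⟨fun h => q0 h.symm, fun h => r1 h.symm, fun h => r0 h.symm⟩
    refine ⟨hv', walk_three.2 ⟨hu, hv', p0, p1, q1⟩, ?_⟩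
    intro k hk
    interval_cases k
    · intro hw
      exact hne (walk_zero.1 hw).1
    · intro hw
      obtain ⟨-, e0, -⟩ := walk_one.1 hw
      exact p0 e0
    · intro hw
      obtain ⟨-, e0, -⟩ := walk_two.1 hw
      exact p1 e0
  have hI4 : ∀ v ∈ F4, ck3Vert v ∧ ck3DistEq u v 4 := by
    intro v hv
    rw [hF4d, Finset.mem_union] at hv
    rcases hv with hv | hv
    · rw [hF4Ad] at hv
      simp only [Finset.mem_filter, Finset.mem_univ, true_and] at hv
      obtain ⟨h0, ⟨h1, h2⟩, h3, h4⟩ := hv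
      have hv' : ck3Vert v := ⟨fun h => h1 (h.symm.trans h0), fun h => h4 h.symm,
        fun h => h3 (h.symm.trans h0)⟩
      obtain ⟨e, he1, he2, he3⟩ := exists_ne3 hn4 (u 1) (u 2) (v 1)
      refine ⟨hv', walk_four.2 ⟨hu, hv', fun h => hbc (h0.symm.trans h),
        e, he1, he2, fun h => he1 (h.trans h0), he3⟩, ?_⟩
      intro k hk
      interval_cases k
      · intro hw
        exact h1 (congrFun (walk_zero.1 hw).1 1)
      · intro hw
        obtain ⟨-, -, e1, -⟩ := walk_one.1 hw
        exact h2 e1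
      · intro hw
        obtain ⟨-, e0, -⟩ := walk_two.1 hw
        exact hbc (h0.symm.trans e0)
      · intro hw
        obtain ⟨-, -, e0, -⟩ := walk_three.1 hw
        exact e0 h0
    · rw [hF4Bd] at hv
      simp only [Finset.mem_filter, Finset.mem_univ, true_and] at hv
      obtain ⟨⟨h0, h1⟩, h2, h3, h4⟩ := hv
      have hv' : ck3Vert v := ⟨fun h => h1 (h.trans h2), fun h => h4 (h.symm.trans h2),
        fun h => h3 h.symm⟩
      obtain ⟨e, he1, he2, he3⟩ := exists_ne3 hn4 (u 1) (u 2) (v 0)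
      refine ⟨hv', walk_four.2 ⟨hu, hv', h1, e, he1, he2, he3,
        fun h => he2 (h.trans h2)⟩, ?_⟩
      intro k hk
      interval_cases k
      · intro hw
        exact hbc ((congrFun (walk_zero.1 hw).1 1).symm.trans h2)
      · intro hw
        obtain ⟨-, e0, -⟩ := walk_one.1 hw
        exact h0 e0
      · intro hw
        obtain ⟨-, e0, -⟩ := walk_two.1 hw
        exact h1 e0
      · intro hw
        obtain ⟨-, -, -, -, e2⟩ := walk_three.1 hw
        exact e2 h2
  have hI5 : ∀ v ∈ F5, ck3Vert v ∧ ck3DistEq u v 5 := by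
    intro v hv
    rw [hF5d] at hv
    simp only [Finset.mem_filter, Finset.mem_univ, true_and] at hv
    obtain ⟨h0, h1, h2, h3⟩ := hv
    have hv' : ck3Vert v := ⟨fun h => hbc (h1.symm.trans (h.symm.trans h0)),
      fun h => h2 (h.symm.trans h1), fun h => h3 (h.symm.trans h0)⟩
    refine ⟨hv', walk_five_of hn4 hu hv' h0 h1, ?_⟩
    intro k hk
    interval_cases k
    · intro hw
      exact hac ((congrFun (walk_zero.1 hw).1 0).symm.trans h0)
    · intro hw
      obtain ⟨-, e0, -⟩ := walk_one.1 hw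
      exact hbc (e0.symm.trans h0)
    · intro hw
      obtain ⟨-, -, e1, -⟩ := walk_two.1 hw
      exact e1 h1
    · intro hw
      obtain ⟨-, -, -, e1, -⟩ := walk_three.1 hw
      exact e1 h0
    · intro hw
      obtain ⟨-, -, e1, -⟩ := walk_four.1 hw
      exact e1 h0
  -- coverage
  have hcov : ∀ v : Fin 3 → Fin (d + 1), ck3Vert v →
      v ∈ F0 ∨ v ∈ F1 ∨ v ∈ F2 ∨ v ∈ F3 ∨ v ∈ F4 ∨ v ∈ F5 := by
    intro v hv
    obtain ⟨w01, w12, w02⟩ := hv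
    by_cases h0 : v 0 = u 1
    · by_cases h1 : v 1 = u 2
      · right; left
        rw [hF1d]
        simp only [Finset.mem_filter, Finset.mem_univ, true_and]
        exact ⟨h0, h1, fun h => w02 (h0.trans h.symm), fun h => w12 (h1.trans h.symm)⟩
      · right; right; right; right; left
        rw [hF4d, Finset.mem_union]
        left
        rw [hF4Ad]
        simp only [Finset.mem_filter, Finset.mem_univ, true_and]
        exact ⟨h0, ⟨fun h => w01 (h0.trans h.symm), h1⟩,
          fun h => w02 (h0.trans h.symm), fun h => w12 h.symm⟩
    · by_cases h1 : v 0 = u 2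
      · by_cases h2 : v 1 = u 1
        · right; right; right; right; right
          rw [hF5d]
          simp only [Finset.mem_filter, Finset.mem_univ, true_and]
          exact ⟨h1, h2, fun h => w12 (h2.trans h.symm), fun h => w02 (h1.trans h.symm)⟩
        · right; right; left
          rw [hF2d]
          simp only [Finset.mem_filter, Finset.mem_univ, true_and]
          exact ⟨h1, ⟨h2, fun h => w01 (h1.trans h.symm)⟩,
            fun h => w12 h.symm, fun h => w02 (h1.trans h.symm)⟩
      · by_cases h2 : v 1 = u 2
        · right; right; right; right; left
          rw [hF4d, Finset.mem_union]
          right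
          rw [hF4Bd]
          simp only [Finset.mem_filter, Finset.mem_univ, true_and]
          exact ⟨⟨h0, h1⟩, h2, fun h => w02 h.symm, fun h => w12 (h2.trans h.symm)⟩
        · by_cases h3 : v = u
          · left
            rw [hF0d]
            exact Finset.mem_singleton.2 h3
          · right; right; right; left
            rw [hF3d, Finset.mem_erase]
            refine ⟨h3, ?_⟩
            rw [hF3bd]
            simp only [Finset.mem_filter, Finset.mem_univ, true_and]
            exact ⟨⟨h0, h1⟩, ⟨fun h => w01 h.symm, h2⟩,
              fun h => w02 h.symm, fun h => w12 h.symm⟩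
  -- class set equalities
  have E0 : {v : Fin 3 → Fin (d + 1) | ck3Vert v ∧ ck3DistEq u v 0} = ↑F0 := by
    ext v
    simp only [Set.mem_setOf_eq, Finset.mem_coe]
    constructor
    · rintro ⟨hv, hdm⟩
      rcases hcov v hv with h | h | h | h | h | h
      · exact h
      · exact absurd (huniq (hI1 v h).2 hdm) (by norm_num)
      · exact absurd (huniq (hI2 v h).2 hdm) (by norm_num)
      · exact absurd (huniq (hI3 v h).2 hdm) (by norm_num)
      · exact absurd (huniq (hI4 v h).2 hdm) (by norm_num)
      · exact absurd (huniq (hI5 v h).2 hdm) (by norm_num)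
    · intro h
      exact hI0 v h
  have E1 : {v : Fin 3 → Fin (d + 1) | ck3Vert v ∧ ck3DistEq u v 1} = ↑F1 := by
    ext v
    simp only [Set.mem_setOf_eq, Finset.mem_coe]
    constructor
    · rintro ⟨hv, hdm⟩
      rcases hcov v hv with h | h | h | h | h | h
      · exact absurd (huniq (hI0 v h).2 hdm) (by norm_num)
      · exact h
      · exact absurd (huniq (hI2 v h).2 hdm) (by norm_num)
      · exact absurd (huniq (hI3 v h).2 hdm) (by norm_num)
      · exact absurd (huniq (hI4 v h).2 hdm) (by norm_num)
      · exact absurd (huniq (hI5 v h).2 hdm) (by norm_num)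
    · intro h
      exact hI1 v h
  have E2 : {v : Fin 3 → Fin (d + 1) | ck3Vert v ∧ ck3DistEq u v 2} = ↑F2 := by
    ext v
    simp only [Set.mem_setOf_eq, Finset.mem_coe]
    constructor
    · rintro ⟨hv, hdm⟩
      rcases hcov v hv with h | h | h | h | h | h
      · exact absurd (huniq (hI0 v h).2 hdm) (by norm_num)
      · exact absurd (huniq (hI1 v h).2 hdm) (by norm_num)
      · exact h
      · exact absurd (huniq (hI3 v h).2 hdm) (by norm_num)
      · exact absurd (huniq (hI4 v h).2 hdm) (by norm_num)
      · exact absurd (huniq (hI5 v h).2 hdm) (by norm_num)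
    · intro h
      exact hI2 v h
  have E3 : {v : Fin 3 → Fin (d + 1) | ck3Vert v ∧ ck3DistEq u v 3} = ↑F3 := by
    ext v
    simp only [Set.mem_setOf_eq, Finset.mem_coe]
    constructor
    · rintro ⟨hv, hdm⟩
      rcases hcov v hv with h | h | h | h | h | h
      · exact absurd (huniq (hI0 v h).2 hdm) (by norm_num)
      · exact absurd (huniq (hI1 v h).2 hdm) (by norm_num)
      · exact absurd (huniq (hI2 v h).2 hdm) (by norm_num)
      · exact h
      · exact absurd (huniq (hI4 v h).2 hdm) (by norm_num)
      · exact absurd (huniq (hI5 v h).2 hdm) (by norm_num)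
    · intro h
      exact hI3 v h
  have E4 : {v : Fin 3 → Fin (d + 1) | ck3Vert v ∧ ck3DistEq u v 4} = ↑F4 := by
    ext v
    simp only [Set.mem_setOf_eq, Finset.mem_coe]
    constructor
    · rintro ⟨hv, hdm⟩
      rcases hcov v hv with h | h | h | h | h | h
      · exact absurd (huniq (hI0 v h).2 hdm) (by norm_num)
      · exact absurd (huniq (hI1 v h).2 hdm) (by norm_num)
      · exact absurd (huniq (hI2 v h).2 hdm) (by norm_num)
      · exact absurd (huniq (hI3 v h).2 hdm) (by norm_num)
      · exact h
      · exact absurd (huniq (hI5 v h).2 hdm) (by norm_num)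
    · intro h
      exact hI4 v h
  have E5 : {v : Fin 3 → Fin (d + 1) | ck3Vert v ∧ ck3DistEq u v 5} = ↑F5 := by
    ext v
    simp only [Set.mem_setOf_eq, Finset.mem_coe]
    constructor
    · rintro ⟨hv, hdm⟩
      rcases hcov v hv with h | h | h | h | h | h
      · exact absurd (huniq (hI0 v h).2 hdm) (by norm_num)
      · exact absurd (huniq (hI1 v h).2 hdm) (by norm_num)
      · exact absurd (huniq (hI2 v h).2 hdm) (by norm_num)
      · exact absurd (huniq (hI3 v h).2 hdm) (by norm_num)
      · exact absurd (huniq (hI4 v h).2 hdm) (by norm_num)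
      · exact h
    · intro h
      exact hI5 v h
  -- total vertex set
  have ES : {v : Fin 3 → Fin (d + 1) | ck3Vert v} = ↑SF := by
    rw [hSFd]
    ext v
    simp
  -- disjointness
  have hdisj : ∀ {i j : ℕ} {Fi Fj : Finset (Fin 3 → Fin (d + 1))}, i ≠ j →
      (∀ w ∈ Fi, ck3Vert w ∧ ck3DistEq u w i) → (∀ w ∈ Fj, ck3Vert w ∧ ck3DistEq u w j) →
      Disjoint Fi Fj := by
    intro i j Fi Fj hij hfi hfj
    rw [Finset.disjoint_left]
    intro w hwi hwj
    exact hij (huniq (hfi w hwi).2 (hfj w hwj).2)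
  have dU1 : Disjoint F0 F1 := hdisj (by norm_num) hI0 hI1
  have dU2 : Disjoint (F0 ∪ F1) F2 := Finset.disjoint_union_left.2
    ⟨hdisj (by norm_num) hI0 hI2, hdisj (by norm_num) hI1 hI2⟩
  have dU3 : Disjoint (F0 ∪ F1 ∪ F2) F3 := Finset.disjoint_union_left.2
    ⟨Finset.disjoint_union_left.2 ⟨hdisj (by norm_num) hI0 hI3, hdisj (by norm_num) hI1 hI3⟩,
      hdisj (by norm_num) hI2 hI3⟩
  have dU4 : Disjoint (F0 ∪ F1 ∪ F2 ∪ F3) F4 := Finset.disjoint_union_left.2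
    ⟨Finset.disjoint_union_left.2 ⟨Finset.disjoint_union_left.2
      ⟨hdisj (by norm_num) hI0 hI4, hdisj (by norm_num) hI1 hI4⟩,
      hdisj (by norm_num) hI2 hI4⟩, hdisj (by norm_num) hI3 hI4⟩
  have dU5 : Disjoint (F0 ∪ F1 ∪ F2 ∪ F3 ∪ F4) F5 := Finset.disjoint_union_left.2
    ⟨Finset.disjoint_union_left.2 ⟨Finset.disjoint_union_left.2 ⟨Finset.disjoint_union_left.2
      ⟨hdisj (by norm_num) hI0 hI5, hdisj (by norm_num) hI1 hI5⟩,
      hdisj (by norm_num) hI2 hI5⟩, hdisj (by norm_num) hI3 hI5⟩,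
      hdisj (by norm_num) hI4 hI5⟩
  have hSFu : SF = F0 ∪ F1 ∪ F2 ∪ F3 ∪ F4 ∪ F5 := by
    ext v
    simp only [Finset.mem_union]
    constructor
    · intro hv
      have hv' : ck3Vert v := by
        rw [hSFd] at hv
        simpa using hv
      rcases hcov v hv' with h | h | h | h | h | h
      · exact Or.inl (Or.inl (Or.inl (Or.inl (Or.inl h))))
      · exact Or.inl (Or.inl (Or.inl (Or.inl (Or.inr h))))
      · exact Or.inl (Or.inl (Or.inl (Or.inr h)))
      · exact Or.inl (Or.inl (Or.inr h))
      · exact Or.inl (Or.inr h)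
      · exact Or.inr h
    · intro hv
      rw [hSFd]
      simp only [Finset.mem_filter, Finset.mem_univ, true_and]
      rcases hv with ((((h | h) | h) | h) | h) | h
      · exact (hI0 v h).1
      · exact (hI1 v h).1
      · exact (hI2 v h).1
      · exact (hI3 v h).1
      · exact (hI4 v h).1
      · exact (hI5 v h).1
  have sm : ∀ (m : ℕ) (F : Finset (Fin 3 → Fin (d + 1))),
      (∀ w ∈ F, ck3Vert w ∧ ck3DistEq u w m) →
      ∑ v ∈ F, sInf {k : ℕ | ck3Walk k u v} = F.card * m := by
    intro m F hF
    rw [Finset.sum_congr rfl (fun v hv => hsinf (hF v hv).2), Finset.sum_const, smul_eq_mul]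
  have hsub : (∑ v : {v : Fin 3 → Fin (d + 1) // ck3Vert v},
      (sInf {k : ℕ | ck3Walk k u v.val} : ℕ))
      = ∑ v ∈ SF, sInf {k : ℕ | ck3Walk k u v} :=
    (Finset.sum_subtype (p := fun v : Fin 3 → Fin (d + 1) => ck3Vert v) SF
      (fun v => by simp [hSFd]) (fun v => sInf {k : ℕ | ck3Walk k u v})).symm
  have hsum : (∑ v : {v : Fin 3 → Fin (d + 1) // ck3Vert v},
      (sInf {k : ℕ | ck3Walk k u v.val} : ℕ))
      = 1 * 0 + (d - 1) * 1 + ((d - 1) * (d - 1)) * 2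
        + ((d - 1) * ((d - 1) * (d - 1)) - 1) * 3
        + ((d - 1) * (d - 1) + (d - 1) * (d - 1)) * 4 + (d - 1) * 5 := by
    rw [hsub, hSFu, Finset.sum_union dU5, Finset.sum_union dU4, Finset.sum_union dU3,
      Finset.sum_union dU2, Finset.sum_union dU1, sm 0 F0 hI0, sm 1 F1 hI1, sm 2 F2 hI2,
      sm 3 F3 hI3, sm 4 F4 hI4, sm 5 F5 hI5, c0, c1, c2, c3, c4, c5]
  refine ⟨?_, ?_, ?_, ?_, ?_, ?_, ?_, ?_⟩
  · rw [E0, Set.ncard_coe_finset, c0]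
  · rw [E1, Set.ncard_coe_finset, c1]
  · rw [E2, Set.ncard_coe_finset, c2]
    ring
  · rw [E3, Set.ncard_coe_finset, c3]
    have h : (d - 1) * ((d - 1) * (d - 1)) = (d - 1) ^ 3 := by ring
    rw [h]
  · rw [E4, Set.ncard_coe_finset, c4]
    ring
  · rw [E5, Set.ncard_coe_finset, c5]
  · rw [ES, Set.ncard_coe_finset, cS]
    obtain ⟨c, rfl⟩ : ∃ c, d = c + 1 := ⟨d - 1, by omega⟩
    simp only [Nat.add_sub_cancel]
    symm
    apply Nat.sub_eq_of_eq_add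
    ring
  · rw [hsum]
    congr 1
    obtain ⟨c, rfl⟩ : ∃ c, d = c + 3 := ⟨d - 3, by omega⟩
    have e1 : c + 3 - 1 = c + 2 := by omega
    rw [e1]
    have e2 : (c + 2) * ((c + 2) * (c + 2)) - 1 = c ^ 3 + 6 * c ^ 2 + 12 * c + 7 := by
      have h : (c + 2) * ((c + 2) * (c + 2)) = (c ^ 3 + 6 * c ^ 2 + 12 * c + 7) + 1 := by
        ring
      rw [h, Nat.add_sub_cancel]
    rw [e2]
    push_cast
    ring
end
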